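/- Let Q be an m×m real matrix with row sums of squares d_i = Σ_j Q_{ij}², let V be an m×m orthogonal matrix all of whose entries satisfy |V_{kj}| ≤ sqrt(2/m), and let χ = (χ₁,…,χ_m) be a vector of independent Rademacher random variables (each taking values ±1 with probability 1/2). Set G_χ = Q Diag(χ) V, so (G_χ)_{ij} = Σ_k Q_{ik} χ_k V_{kj}. Then for every i, j and every γ > 0: Prob( (G_χ)_{ij}² > 3γ d_i / m ) ≤ √3 · exp(−γ/2). -/

import Mathlib

open MeasureTheory Matrix ENNReal

set_option maxHeartbeats 1600000

lemma sum_prod_bool {m : ℕ} (g : Fin m → Bool → ℝ) :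
    ∑ χ : Fin m → Bool, ∏ k, g k (χ k) = ∏ k, (g k true + g k false) := by
  calc ∑ χ : Fin m → Bool, ∏ k, g k (χ k)
      = ∑ χ ∈ Fintype.piFinset (fun _ : Fin m => (Finset.univ : Finset Bool)), ∏ k, g k (χ k) := by
        rw [Fintype.piFinset_univ]
    _ = ∏ k, ∑ b, g k b := (Finset.prod_univ_sum _ _).symm
    _ = ∏ k, (g k true + g k false) := by simp

lemma pi_unif_le {m : ℕ} (A : Set (Fin m → Bool)) (f : (Fin m → Bool) → ℝ)
    (hf : ∀ χ, 0 ≤ f χ) (h1 : ∀ χ ∈ A, 1 ≤ f χ) :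
    (Measure.pi fun _ : Fin m => (PMF.uniformOfFintype Bool).toMeasure) A
      ≤ ENNReal.ofReal (((2:ℝ) ^ m)⁻¹ * ∑ χ, f χ) := by
  set P := Measure.pi fun _ : Fin m => (PMF.uniformOfFintype Bool).toMeasure with hPdef
  have hsingle : ∀ χ : Fin m → Bool, P {χ} = (2 ^ m : ℝ≥0∞)⁻¹ := by
    intro χ
    rw [hPdef, show ({χ} : Set (Fin m → Bool)) = Set.pi Set.univ (fun k => {χ k}) from
      (Set.univ_pi_singleton χ).symm]
    rw [Measure.pi_pi]
    simp [PMF.toMeasure_apply_singleton _ _ (measurableSet_singleton _),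
      PMF.uniformOfFintype_apply, ENNReal.inv_pow]
  classical
  set s : Finset (Fin m → Bool) := Finset.univ.filter (· ∈ A) with hs
  have hA : A = ⋃ χ ∈ s, ({χ} : Set (Fin m → Bool)) := by
    ext x; simp [hs]
  have hPA : P A = (s.card : ℝ≥0∞) * (2 ^ m : ℝ≥0∞)⁻¹ := by
    rw [hA, measure_biUnion_finset]
    · simp [hsingle]
    · intro x _ y _ hxy
      simp [Set.disjoint_singleton, hxy]
    · intro x _; exact (Set.toFinite _).measurableSet
  have hcard : (s.card : ℝ) ≤ ∑ χ, f χ := by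
    calc (s.card : ℝ) = ∑ χ ∈ s, 1 := by simp
      _ ≤ ∑ χ ∈ s, f χ := Finset.sum_le_sum fun χ hχ => h1 χ (by simpa [hs] using hχ)
      _ ≤ ∑ χ, f χ :=
          Finset.sum_le_sum_of_subset_of_nonneg (Finset.subset_univ _) fun χ _ _ => hf χ
  rw [hPA]
  calc (s.card : ℝ≥0∞) * (2 ^ m : ℝ≥0∞)⁻¹
      = ENNReal.ofReal ((s.card : ℝ) * ((2:ℝ) ^ m)⁻¹) := by
        rw [ENNReal.ofReal_mul (p := (s.card : ℝ)) (Nat.cast_nonneg _)]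
        congr 1
        · simp
        · rw [ENNReal.ofReal_inv_of_pos (by positivity : (0:ℝ) < 2 ^ m)]
          congr 1
          rw [ENNReal.ofReal_pow (by norm_num)]
          norm_num
    _ ≤ ENNReal.ofReal (((2:ℝ) ^ m)⁻¹ * ∑ χ, f χ) := by
        apply ENNReal.ofReal_le_ofReal
        rw [mul_comm (((2:ℝ) ^ m)⁻¹)]
        gcongr

lemma chernoff {m : ℕ} (a : Fin m → ℝ) (t l : ℝ) (hl : 0 ≤ l) :
    (Measure.pi fun _ : Fin m => (PMF.uniformOfFintype Bool).toMeasure)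
      {χ : Fin m → Bool | t ≤ ∑ k, a k * (if χ k then (1:ℝ) else -1)}
    ≤ ENNReal.ofReal (Real.exp (l ^ 2 * (∑ k, (a k) ^ 2) / 2 - l * t)) := by
  have step := pi_unif_le {χ : Fin m → Bool | t ≤ ∑ k, a k * (if χ k then (1:ℝ) else -1)}
    (fun χ => Real.exp ((∑ k, l * (a k * (if χ k then (1:ℝ) else -1))) - l * t))
    (fun χ => Real.exp_nonneg _)
    (by
      intro χ hχ
      have hχ' : t ≤ ∑ k, a k * (if χ k then (1:ℝ) else -1) := hχ
      have hle : l * t ≤ ∑ k, l * (a k * (if χ k then (1:ℝ) else -1)) := by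
        rw [← Finset.mul_sum]
        exact mul_le_mul_of_nonneg_left hχ' hl
      calc (1:ℝ) = Real.exp 0 := Real.exp_zero.symm
        _ ≤ _ := Real.exp_le_exp.mpr (by linarith))
  refine step.trans (ENNReal.ofReal_le_ofReal ?_)
  have hsum : ∑ χ : Fin m → Bool, Real.exp ((∑ k, l * (a k * (if χ k then (1:ℝ) else -1))) - l * t)
      ≤ 2 ^ m * Real.exp (l ^ 2 * (∑ k, (a k) ^ 2) / 2 - l * t) := by
    have h1 : ∀ χ : Fin m → Bool,
        Real.exp ((∑ k, l * (a k * (if χ k then (1:ℝ) else -1))) - l * t)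
        = Real.exp (-(l * t)) * ∏ k, Real.exp (l * (a k * (if χ k then (1:ℝ) else -1))) := by
      intro χ
      rw [← Real.exp_sum, ← Real.exp_add]
      congr 1
      ring
    rw [Finset.sum_congr rfl fun χ _ => h1 χ, ← Finset.mul_sum,
      sum_prod_bool (fun k b => Real.exp (l * (a k * (if b then (1:ℝ) else -1))))]
    have h3 : ∏ k, (Real.exp (l * (a k * (if true then (1:ℝ) else -1)))
          + Real.exp (l * (a k * (if false then (1:ℝ) else -1))))
        ≤ 2 ^ m * Real.exp (l ^ 2 * (∑ k, (a k) ^ 2) / 2) := by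
      have h4 : ∏ k, (Real.exp (l * (a k * (if true then (1:ℝ) else -1)))
            + Real.exp (l * (a k * (if false then (1:ℝ) else -1))))
          ≤ ∏ k, (2 * Real.exp ((l * a k) ^ 2 / 2)) := by
        apply Finset.prod_le_prod
        · intro k _; positivity
        · intro k _
          have hc := Real.cosh_le_exp_half_sq (l * a k)
          rw [Real.cosh_eq] at hc
          have e1 : (if (true:Bool) = true then (1:ℝ) else -1) = 1 := rfl
          have e2 : (if (false:Bool) = true then (1:ℝ) else -1) = -1 := rfl
          rw [e1, e2, mul_one, show l * (a k * -1) = -(l * a k) by ring]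
          linarith
      refine h4.trans_eq ?_
      rw [Finset.prod_mul_distrib, Finset.prod_const, ← Real.exp_sum]
      congr 1
      · simp
      · rw [Finset.mul_sum, Finset.sum_div]
        congr 1
        exact Finset.sum_congr rfl fun k _ => by ring
    calc Real.exp (-(l * t)) * ∏ k, (Real.exp (l * (a k * (if true then (1:ℝ) else -1)))
          + Real.exp (l * (a k * (if false then (1:ℝ) else -1))))
        ≤ Real.exp (-(l * t)) * (2 ^ m * Real.exp (l ^ 2 * (∑ k, (a k) ^ 2) / 2)) :=
          mul_le_mul_of_nonneg_left h3 (Real.exp_nonneg _)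
      _ = 2 ^ m * Real.exp (l ^ 2 * (∑ k, (a k) ^ 2) / 2 - l * t) := by
          rw [Real.exp_sub, Real.exp_neg]
          field_simp
    
  calc ((2:ℝ) ^ m)⁻¹ * ∑ χ : Fin m → Bool,
        Real.exp ((∑ k, l * (a k * (if χ k then (1:ℝ) else -1))) - l * t)
      ≤ ((2:ℝ) ^ m)⁻¹ * (2 ^ m * Real.exp (l ^ 2 * (∑ k, (a k) ^ 2) / 2 - l * t)) := by
        exact mul_le_mul_of_nonneg_left hsum (by positivity)
    _ = Real.exp (l ^ 2 * (∑ k, (a k) ^ 2) / 2 - l * t) := by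
        rw [← mul_assoc, inv_mul_cancel₀ (by positivity), one_mul]

/-- sub-Gaussian-type tail bound for the entries of
`G_χ = Q Diag(χ) V`, where `χ` is a Rademacher vector (modelled by independent
uniform `Bool`s mapped to `±1`), `V` is orthogonal with entries of magnitude at
most `√(2/m)`, and `d_i = Σ_j Q_{ij}²`:
`Prob((G_χ)_{ij}² > 3γ d_i/m) ≤ √3 exp(−γ/2)`. -/
theorem stmt7
    {m : ℕ} (hm : 0 < m)
    (Q V : Matrix (Fin m) (Fin m) ℝ)
    (d : Fin m → ℝ) (hd : ∀ i, d i = ∑ j, (Q i j) ^ 2)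
    (hV_orth : Vᵀ * V = 1)
    (hV_ent : ∀ k j, |V k j| ≤ Real.sqrt (2 / m))
    (P : Measure (Fin m → Bool))
    (hP : P = Measure.pi fun _ => (PMF.uniformOfFintype Bool).toMeasure) :
    ∀ i j : Fin m, ∀ γ : ℝ, 0 < γ →
      P {χ | 3 * γ * d i / m <
          (∑ k, Q i k * (if χ k then (1 : ℝ) else -1) * V k j) ^ 2}
        ≤ ENNReal.ofReal (Real.sqrt 3 * Real.exp (-γ / 2)) := by
  intro i j γ hγ
  subst hP
  have hm' : (0:ℝ) < m := Nat.cast_pos.mpr hm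
  set a : Fin m → ℝ := fun k => Q i k * V k j with ha
  have hset : ∀ χ : Fin m → Bool,
      (∑ k, Q i k * (if χ k then (1 : ℝ) else -1) * V k j)
        = ∑ k, a k * (if χ k then (1:ℝ) else -1) :=
    fun χ => Finset.sum_congr rfl fun k _ => by rw [ha]; ring
  have hd0 : 0 ≤ d i := by
    rw [hd i]; exact Finset.sum_nonneg fun k _ => sq_nonneg _
  have hσ : ∑ k, (a k) ^ 2 ≤ 2 * d i / m := by
    have h1 : ∀ k, (a k) ^ 2 ≤ (Q i k) ^ 2 * (2 / m) := by
      intro k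
      have h2 : (V k j) ^ 2 ≤ 2 / m := by
        have h3 := hV_ent k j
        have h4 : |V k j| ^ 2 ≤ (Real.sqrt (2 / m)) ^ 2 :=
          pow_le_pow_left₀ (abs_nonneg _) h3 2
        rwa [sq_abs, Real.sq_sqrt (by positivity)] at h4
      calc (a k) ^ 2 = (Q i k) ^ 2 * (V k j) ^ 2 := by rw [ha]; ring
        _ ≤ (Q i k) ^ 2 * (2 / m) := by
            exact mul_le_mul_of_nonneg_left h2 (sq_nonneg _)
    calc ∑ k, (a k) ^ 2 ≤ ∑ k, (Q i k) ^ 2 * (2 / m) :=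
          Finset.sum_le_sum fun k _ => h1 k
      _ = 2 * d i / m := by rw [← Finset.sum_mul, ← hd i]; ring
  have hlog : 4 * Real.log 2 ≤ 3 * Real.log 3 := by
    have h := Real.log_le_log (by norm_num : (0:ℝ) < 16) (by norm_num : (16:ℝ) ≤ 27)
    rw [show (16:ℝ) = 2 ^ 4 by norm_num, show (27:ℝ) = 3 ^ 3 by norm_num,
      Real.log_pow, Real.log_pow] at h
    push_cast at h
    linarith
  have hsqrt3 : Real.sqrt 3 = Real.exp (Real.log 3 / 2) := by
    rw [← Real.log_sqrt (by norm_num : (0:ℝ) ≤ 3), Real.exp_log (Real.sqrt_pos.mpr (by norm_num))]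
  by_cases hcase : γ ≤ Real.log 3
  · -- trivial bound P ≤ 1
    have h1 : (1:ℝ) ≤ Real.sqrt 3 * Real.exp (-γ / 2) := by
      rw [hsqrt3, ← Real.exp_add]
      calc (1:ℝ) = Real.exp 0 := Real.exp_zero.symm
        _ ≤ _ := Real.exp_le_exp.mpr (by linarith)
    calc (Measure.pi fun _ : Fin m => (PMF.uniformOfFintype Bool).toMeasure)
          {χ | 3 * γ * d i / m < (∑ k, Q i k * (if χ k then (1 : ℝ) else -1) * V k j) ^ 2}
        ≤ 1 := prob_le_one
      _ = ENNReal.ofReal 1 := by simp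
      _ ≤ ENNReal.ofReal (Real.sqrt 3 * Real.exp (-γ / 2)) := ENNReal.ofReal_le_ofReal h1
  · push_neg at hcase
    by_cases hσ0 : ∑ k, (a k) ^ 2 = 0
    · -- all a k = 0, set is empty
      have hz : ∀ k, a k = 0 := by
        intro k
        have := (Finset.sum_eq_zero_iff_of_nonneg (fun k _ => sq_nonneg (a k))).mp hσ0 k
          (Finset.mem_univ k)
        exact pow_eq_zero_iff (by norm_num) |>.mp this
      have hempty : {χ : Fin m → Bool | 3 * γ * d i / m <
          (∑ k, Q i k * (if χ k then (1 : ℝ) else -1) * V k j) ^ 2} = ∅ := by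
        ext χ
        simp only [Set.mem_setOf_eq, Set.mem_empty_iff_false, iff_false, not_lt]
        rw [hset χ]
        have : ∑ k, a k * (if χ k then (1:ℝ) else -1) = 0 :=
          Finset.sum_eq_zero fun k _ => by rw [hz k, zero_mul]
        rw [this]
        have h9 : (0:ℝ) ≤ 3 * γ * d i / ↑m := by
          apply div_nonneg _ hm'.le
          nlinarith
        simpa using h9
      rw [hempty]
      simp
    · -- Chernoff case
      have hσpos : 0 < ∑ k, (a k) ^ 2 :=
        lt_of_le_of_ne (Finset.sum_nonneg fun k _ => sq_nonneg _) (Ne.symm hσ0)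
      set σ2 := ∑ k, (a k) ^ 2 with hσ2def
      have hdpos : 0 < d i := by
        by_contra h
        push_neg at h
        have h8 : 2 * d i / ↑m ≤ 0 := div_nonpos_of_nonpos_of_nonneg (by linarith) hm'.le
        linarith
      set u := 3 * γ * d i / m with hu
      have hu0 : 0 < u := by rw [hu]; positivity
      set tt := Real.sqrt u with htt
      have htt0 : 0 < tt := Real.sqrt_pos.mpr hu0
      have htt2 : tt ^ 2 = u := Real.sq_sqrt hu0.le
      set l := tt / σ2 with hl
      have hl0 : 0 ≤ l := by positivity
      -- subset in union
      have hsub : {χ : Fin m → Bool | 3 * γ * d i / m <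
            (∑ k, Q i k * (if χ k then (1 : ℝ) else -1) * V k j) ^ 2}
          ⊆ {χ : Fin m → Bool | tt ≤ ∑ k, a k * (if χ k then (1:ℝ) else -1)}
            ∪ {χ : Fin m → Bool | tt ≤ ∑ k, (-a) k * (if χ k then (1:ℝ) else -1)} := by
        intro χ hχ
        simp only [Set.mem_setOf_eq] at hχ
        rw [hset χ] at hχ
        set S := ∑ k, a k * (if χ k then (1:ℝ) else -1) with hSdef
        have habs : tt < |S| := by
          rw [htt]
          calc Real.sqrt u < Real.sqrt (S ^ 2) := Real.sqrt_lt_sqrt hu0.le hχ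
            _ = |S| := Real.sqrt_sq_eq_abs S
        have hnegS : ∑ k, (-a) k * (if χ k then (1:ℝ) else -1) = -S := by
          rw [hSdef, ← Finset.sum_neg_distrib]
          refine Finset.sum_congr rfl fun k _ => ?_
          simp only [Pi.neg_apply]
          ring
        rcases abs_cases S with ⟨h1, _⟩ | ⟨h1, _⟩
        · left
          simp only [Set.mem_setOf_eq, ← hSdef]
          linarith
        · right
          simp only [Set.mem_setOf_eq, hnegS]
          linarith
      have hσ2neg : ∑ k, ((-a) k) ^ 2 = σ2 := by
        rw [hσ2def]
        exact Finset.sum_congr rfl fun k _ => by simp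
      have hbound1 := chernoff a tt l hl0
      have hbound2 := chernoff (-a) tt l hl0
      rw [hσ2neg] at hbound2
      have hexp : l ^ 2 * σ2 / 2 - l * tt = -(u / (2 * σ2)) := by
        rw [hl, ← htt2]
        field_simp
        ring
      have hval : Real.exp (l ^ 2 * σ2 / 2 - l * tt) ≤ Real.exp (-(3 * γ / 4)) := by
        rw [hexp]
        apply Real.exp_le_exp.mpr
        rw [neg_le_neg_iff]
        have h2σ : (0:ℝ) < 2 * σ2 := by linarith
        rw [le_div_iff₀ h2σ]
        calc 3 * γ / 4 * (2 * σ2) ≤ 3 * γ / 4 * (2 * (2 * d i / ↑m)) := by nlinarith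
          _ = u := by rw [hu]; ring
      have hfinal : 2 * Real.exp (-(3 * γ / 4)) ≤ Real.sqrt 3 * Real.exp (-γ / 2) := by
        have h2 : (2:ℝ) * Real.exp (-(3 * γ / 4)) = Real.exp (Real.log 2 + -(3 * γ / 4)) := by
          rw [Real.exp_add, Real.exp_log (by norm_num)]
        have h3 : Real.sqrt 3 * Real.exp (-γ / 2) = Real.exp (Real.log 3 / 2 + -γ / 2) := by
          rw [Real.exp_add, hsqrt3]
        rw [h2, h3]
        apply Real.exp_le_exp.mpr
        linarith
      calc (Measure.pi fun _ : Fin m => (PMF.uniformOfFintype Bool).toMeasure)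
            {χ | 3 * γ * d i / m < (∑ k, Q i k * (if χ k then (1 : ℝ) else -1) * V k j) ^ 2}
          ≤ (Measure.pi fun _ : Fin m => (PMF.uniformOfFintype Bool).toMeasure)
              ({χ : Fin m → Bool | tt ≤ ∑ k, a k * (if χ k then (1:ℝ) else -1)}
                ∪ {χ : Fin m → Bool | tt ≤ ∑ k, (-a) k * (if χ k then (1:ℝ) else -1)}) :=
            measure_mono hsub
        _ ≤ (Measure.pi fun _ : Fin m => (PMF.uniformOfFintype Bool).toMeasure)
              {χ : Fin m → Bool | tt ≤ ∑ k, a k * (if χ k then (1:ℝ) else -1)}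
            + (Measure.pi fun _ : Fin m => (PMF.uniformOfFintype Bool).toMeasure)
              {χ : Fin m → Bool | tt ≤ ∑ k, (-a) k * (if χ k then (1:ℝ) else -1)} :=
            measure_union_le _ _
        _ ≤ ENNReal.ofReal (Real.exp (l ^ 2 * σ2 / 2 - l * tt))
            + ENNReal.ofReal (Real.exp (l ^ 2 * σ2 / 2 - l * tt)) := add_le_add hbound1 hbound2
        _ = ENNReal.ofReal (2 * Real.exp (l ^ 2 * σ2 / 2 - l * tt)) := by
            rw [← ENNReal.ofReal_add (Real.exp_nonneg _) (Real.exp_nonneg _)]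
            congr 1
            ring
        _ ≤ ENNReal.ofReal (Real.sqrt 3 * Real.exp (-γ / 2)) := by
            apply ENNReal.ofReal_le_ofReal
            calc 2 * Real.exp (l ^ 2 * σ2 / 2 - l * tt)
                ≤ 2 * Real.exp (-(3 * γ / 4)) := by linarith [hval]
              _ ≤ _ := hfinal
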